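/- Let X, V, W, Y be real Banach spaces and D ⊆ X × V. Fix ρ > 0, α > 0, τ > 0, m, o, r, q ∈ [1,∞), x₀ ∈ X, u₀ ∈ V, define the misfit 𝒮((w,y₁),(w',y₂)) := (ρ/m)‖w − w'‖_W^m + (1/o)‖y₁ − y₂‖_Y^o, the regularizer R₂(x,u) := (1/r)‖x − x₀‖^r + (1/q)‖u − u₀‖^q, and C_S := max{2^{m−1}, 2^{o−1}}. Let A : X × V → W and C : V → Y be Fréchet differentiable at (x_k,u_k) ∈ D and u_k respectively, define the linearized all-at-once operator 𝐋(x,u) := (A(x_k,u_k) + A'(x_k,u_k)(x − x_k, u − u_k), C(u_k) + C'(u_k)(u − u_k)), and write 𝐅(x,u) := (A(x,u), C(u)). Let (x†,u†) ∈ D satisfy A(x†,u†) = 0 and C(u†) = y, and let yδ ∈ Y with ‖y − yδ‖ ≤ δ, δ ≥ 0. Assume: (i) (x_{k+1},u_{k+1}) minimizes 𝒮(𝐋(x,u),(0,yδ)) + α R₂(x,u) over D; (ii) 𝒮(𝐋(x†,u†), 𝐅(x†,u†)) ≤ c_tc·𝒮(𝐅(x†,u†), 𝐅(x_k,u_k))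 with c_tc ≥ 0; (iii) 𝒮(𝐅(x_k,u_k),(0,yδ)) ≥ τ δ^o/o; and (iv) 𝒮(𝐋(x_{k+1},u_{k+1}),(0,yδ)) ≥ σ̲·𝒮(𝐅(x_k,u_k),(0,yδ)) with σ̲ ≥ C_S² c_tc + C_S(1 + C_S c_tc)/τ. Then R₂(x_{k+1},u_{k+1}) ≤ R₂(x†,u†). -/

import Mathlib

lemma rpow_add_le_aux {a b p : ℝ} (ha : 0 ≤ a) (hb : 0 ≤ b) (hp : 1 ≤ p) :
    (a + b) ^ p ≤ 2 ^ (p - 1) * (a ^ p + b ^ p) := by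
  have h := NNReal.rpow_add_le_mul_rpow_add_rpow a.toNNReal b.toNNReal hp
  have := (NNReal.coe_le_coe).2 h
  push_cast at this
  rwa [Real.coe_toNNReal a ha, Real.coe_toNNReal b hb] at this


/-- One step of the all-at-once IRGNM with regularization of both parameter and
state via `R₂(x,u) = (1/r)‖x−x₀‖^r + (1/q)‖u−u₀‖^q` (boundedness estimate (3.9)
in Proposition 3.1): if the new iterate minimizes the linearized misfit plus
`αR₂` over `D`, the tangential cone estimate holds, the discrepancy principle is
not yet reached, and the inexact-Newton lower bound holds with
`σ̲ ≥ C_S²c_tc + C_S(1+C_Sc_tc)/τ`, then `R₂(x_{k+1},u_{k+1}) ≤ R₂(x†,u†)`. -/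
theorem allAtOnce_IRGNM_R2_bound
    {X V W Y : Type*}
    [NormedAddCommGroup X] [NormedSpace ℝ X] [CompleteSpace X]
    [NormedAddCommGroup V] [NormedSpace ℝ V] [CompleteSpace V]
    [NormedAddCommGroup W] [NormedSpace ℝ W] [CompleteSpace W]
    [NormedAddCommGroup Y] [NormedSpace ℝ Y] [CompleteSpace Y]
    (A : X × V → W) (C : V → Y) (D : Set (X × V))
    (ρ α τ m o r q ctc σ CS : ℝ)
    (hρ : 0 < ρ) (hα : 0 < α) (hτ : 0 < τ)
    (hm : 1 ≤ m) (ho : 1 ≤ o) (hr : 1 ≤ r) (hq : 1 ≤ q) (hctc : 0 ≤ ctc)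
    (hCS : CS = max ((2 : ℝ) ^ (m - 1)) ((2 : ℝ) ^ (o - 1)))
    (x₀ : X) (u₀ : V)
    (R₂ : X × V → ℝ)
    (hR₂ : ∀ p : X × V, R₂ p = 1 / r * ‖p.1 - x₀‖ ^ r + 1 / q * ‖p.2 - u₀‖ ^ q)
    (S : (W × Y) → (W × Y) → ℝ)
    (hS : ∀ p q' : W × Y,
      S p q' = ρ / m * ‖p.1 - q'.1‖ ^ m + 1 / o * ‖p.2 - q'.2‖ ^ o)
    (xk : X) (uk : V) (hkD : (xk, uk) ∈ D)
    (A' : X × V →L[ℝ] W) (C' : V →L[ℝ] Y)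
    (hA' : HasFDerivAt A A' (xk, uk)) (hC' : HasFDerivAt C C' uk)
    (Lop : X × V → W × Y)
    (hLop : ∀ p : X × V,
      Lop p = (A (xk, uk) + A' (p.1 - xk, p.2 - uk), C uk + C' (p.2 - uk)))
    (F : X × V → W × Y) (hF : ∀ p : X × V, F p = (A p, C p.2))
    (xdag : X) (udag : V) (hdagD : (xdag, udag) ∈ D)
    (hAdag : A (xdag, udag) = 0) (y : Y) (hCdag : C udag = y)
    (yδ : Y) (δ : ℝ) (hδ : 0 ≤ δ) (hnoise : ‖y - yδ‖ ≤ δ)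
    (xk1 : X) (uk1 : V) (hk1D : (xk1, uk1) ∈ D)
    (hmin : ∀ p ∈ D,
      S (Lop (xk1, uk1)) ((0 : W), yδ) + α * R₂ (xk1, uk1)
        ≤ S (Lop p) ((0 : W), yδ) + α * R₂ p)
    (htc : S (Lop (xdag, udag)) (F (xdag, udag))
        ≤ ctc * S (F (xdag, udag)) (F (xk, uk)))
    (hdisc : τ * δ ^ o / o ≤ S (F (xk, uk)) ((0 : W), yδ))
    (hσ : CS ^ 2 * ctc + CS * (1 + CS * ctc) / τ ≤ σ)
    (hsigma : σ * S (F (xk, uk)) ((0 : W), yδ)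
        ≤ S (Lop (xk1, uk1)) ((0 : W), yδ)) :
    R₂ (xk1, uk1) ≤ R₂ (xdag, udag) := by
  
  have hm0 : (0:ℝ) < m := lt_of_lt_of_le one_pos hm
  have ho0 : (0:ℝ) < o := lt_of_lt_of_le one_pos ho
  have hCS1 : (1:ℝ) ≤ CS := by
    rw [hCS]
    calc (1:ℝ) = (2:ℝ) ^ (0:ℝ) := by simp
    _ ≤ (2:ℝ) ^ (m - 1) := Real.rpow_le_rpow_of_exponent_le one_le_two (by linarith)
    _ ≤ _ := le_max_left _ _
  have hCS0 : (0:ℝ) ≤ CS := by linarith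
  have hρm : (0:ℝ) ≤ ρ / m := div_nonneg hρ.le hm0.le
  have h1o : (0:ℝ) ≤ 1 / o := by positivity
  -- nonnegativity of S
  have hSnn : ∀ a b : W × Y, 0 ≤ S a b := by
    intro a b
    rw [hS]
    exact add_nonneg (mul_nonneg hρm (Real.rpow_nonneg (norm_nonneg _) _))
      (mul_nonneg h1o (Real.rpow_nonneg (norm_nonneg _) _))
  -- symmetry of S
  have hSsymm : ∀ a b : W × Y, S a b = S b a := by
    intro a b
    rw [hS, hS, norm_sub_rev, norm_sub_rev a.2]
  -- quasi triangle inequality for S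
  have hStri : ∀ a b c : W × Y, S a c ≤ CS * (S a b + S b c) := by
    intro a b c
    rw [hS, hS, hS]
    have h1 : ‖a.1 - c.1‖ ^ m ≤ CS * (‖a.1 - b.1‖ ^ m + ‖b.1 - c.1‖ ^ m) := by
      calc ‖a.1 - c.1‖ ^ m ≤ (‖a.1 - b.1‖ + ‖b.1 - c.1‖) ^ m :=
            Real.rpow_le_rpow (norm_nonneg _) (norm_sub_le_norm_sub_add_norm_sub _ _ _) hm0.le
        _ ≤ 2 ^ (m - 1) * (‖a.1 - b.1‖ ^ m + ‖b.1 - c.1‖ ^ m) :=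
            rpow_add_le_aux (norm_nonneg _) (norm_nonneg _) hm
        _ ≤ CS * (‖a.1 - b.1‖ ^ m + ‖b.1 - c.1‖ ^ m) := by
            apply mul_le_mul_of_nonneg_right (hCS ▸ le_max_left _ _)
            exact add_nonneg (Real.rpow_nonneg (norm_nonneg _) _)
              (Real.rpow_nonneg (norm_nonneg _) _)
    have h2 : ‖a.2 - c.2‖ ^ o ≤ CS * (‖a.2 - b.2‖ ^ o + ‖b.2 - c.2‖ ^ o) := by
      calc ‖a.2 - c.2‖ ^ o ≤ (‖a.2 - b.2‖ + ‖b.2 - c.2‖) ^ o :=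
            Real.rpow_le_rpow (norm_nonneg _) (norm_sub_le_norm_sub_add_norm_sub _ _ _) ho0.le
        _ ≤ 2 ^ (o - 1) * (‖a.2 - b.2‖ ^ o + ‖b.2 - c.2‖ ^ o) :=
            rpow_add_le_aux (norm_nonneg _) (norm_nonneg _) ho
        _ ≤ CS * (‖a.2 - b.2‖ ^ o + ‖b.2 - c.2‖ ^ o) := by
            apply mul_le_mul_of_nonneg_right (hCS ▸ le_max_right _ _)
            exact add_nonneg (Real.rpow_nonneg (norm_nonneg _) _)
              (Real.rpow_nonneg (norm_nonneg _) _)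
    calc ρ / m * ‖a.1 - c.1‖ ^ m + 1 / o * ‖a.2 - c.2‖ ^ o
        ≤ ρ / m * (CS * (‖a.1 - b.1‖ ^ m + ‖b.1 - c.1‖ ^ m))
            + 1 / o * (CS * (‖a.2 - b.2‖ ^ o + ‖b.2 - c.2‖ ^ o)) :=
          add_le_add (mul_le_mul_of_nonneg_left h1 hρm) (mul_le_mul_of_nonneg_left h2 h1o)
      _ = CS * ((ρ / m * ‖a.1 - b.1‖ ^ m + 1 / o * ‖a.2 - b.2‖ ^ o)
            + (ρ / m * ‖b.1 - c.1‖ ^ m + 1 / o * ‖b.2 - c.2‖ ^ o)) := by ring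
  -- F at the true solution
  have hFdag : F (xdag, udag) = ((0 : W), y) := by
    rw [hF]; simp [hAdag, hCdag]
  set SFk := S (F (xk, uk)) ((0 : W), yδ) with hSFkdef
  have hSFknn : 0 ≤ SFk := hSnn _ _
  set b := S (F (xdag, udag)) ((0 : W), yδ) with hbdef
  have hbnn : 0 ≤ b := hSnn _ _
  have hb : b ≤ SFk / τ := by
    have hbval : b = 1 / o * ‖y - yδ‖ ^ o := by
      rw [hbdef, hS, hFdag]
      simp [Real.zero_rpow (by linarith : m ≠ 0)]
    have h1 : ‖y - yδ‖ ^ o ≤ δ ^ o := Real.rpow_le_rpow (norm_nonneg _) hnoise ho0.le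
    have h2 : b ≤ δ ^ o / o := by
      have := mul_le_mul_of_nonneg_left h1 h1o
      rw [hbval]
      calc 1 / o * ‖y - yδ‖ ^ o ≤ 1 / o * δ ^ o := this
        _ = δ ^ o / o := by ring
    have h3 : δ ^ o / o ≤ SFk / τ := by
      rw [div_le_iff₀ ho0] at hdisc
      rw [div_le_div_iff₀ ho0 hτ]
      linarith
    linarith
  -- tangential cone step
  set a := S (Lop (xdag, udag)) (F (xdag, udag)) with hadef
  have h2' : S (F (xdag, udag)) (F (xk, uk)) ≤ CS * (b + SFk) := by
    have := hStri (F (xdag, udag)) ((0 : W), yδ) (F (xk, uk))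
    rwa [hSsymm ((0 : W), yδ) (F (xk, uk))] at this
  have step1 : a ≤ ctc * (CS * (b + SFk)) := htc.trans (mul_le_mul_of_nonneg_left h2' hctc)
  have step2 : S (Lop (xdag, udag)) ((0 : W), yδ) ≤ CS * (ctc * (CS * (b + SFk)) + b) :=
    (hStri _ (F (xdag, udag)) _).trans
      (mul_le_mul_of_nonneg_left (add_le_add_left step1 _) hCS0)
  have step3 : CS * (ctc * (CS * (b + SFk)) + b)
      ≤ CS * (ctc * (CS * (SFk / τ + SFk)) + SFk / τ) := by
    apply mul_le_mul_of_nonneg_left _ hCS0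
    nlinarith [mul_nonneg (mul_nonneg hctc hCS0) (sub_nonneg.2 hb)]
  have step4 : CS * (ctc * (CS * (SFk / τ + SFk)) + SFk / τ)
      = (CS ^ 2 * ctc + CS * (1 + CS * ctc) / τ) * SFk := by
    field_simp
    ring
  have step5 : (CS ^ 2 * ctc + CS * (1 + CS * ctc) / τ) * SFk ≤ σ * SFk :=
    mul_le_mul_of_nonneg_right hσ hSFknn
  have key : S (Lop (xdag, udag)) ((0 : W), yδ) ≤ S (Lop (xk1, uk1)) ((0 : W), yδ) := by
    calc S (Lop (xdag, udag)) ((0 : W), yδ) ≤ CS * (ctc * (CS * (b + SFk)) + b) := step2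
      _ ≤ CS * (ctc * (CS * (SFk / τ + SFk)) + SFk / τ) := step3
      _ = (CS ^ 2 * ctc + CS * (1 + CS * ctc) / τ) * SFk := step4
      _ ≤ σ * SFk := step5
      _ ≤ S (Lop (xk1, uk1)) ((0 : W), yδ) := hsigma
  have hfinal := hmin (xdag, udag) hdagD
  have : α * R₂ (xk1, uk1) ≤ α * R₂ (xdag, udag) := by linarith
  exact le_of_mul_le_mul_left this hα
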